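/- Let L₁,…,Lₙ ∈ R[x][∂] with r_i = ord(L_i), p_i = lc(L_i), and let 𝔞 ⊆ 𝐑 = R[x][y_{i,j}] be the ideal generated by ∂^j L_i · y_{i,0} for all i = 1..n and j ≥ 0. For every m ∈ ℕ and every homogeneous P ∈ 𝐑 with y-multi-degree (D_1,…,D_n) and involving only variables y_{i,j} with j < r_i + m, there exists a homogeneous V ∈ 𝐑 with (Π_i (p_i^{D_i})^{[m]})·P ≡ V mod 𝔞, such that V involves only y_{i,j} with j < r_i, has y-multi-degree ≤ (D_1,…,D_n), and deg_x(V) ≤ deg_x(P) + m·Σ_i D_i·deg(L_i). -/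

import Mathlib

/-- An Ore algebra `A = R[x][∂]` over `R[x]`, presented axiomatically: a ring `A`
containing `R[x]` via `ι`, with a distinguished element `pd` (the Ore variable `∂`)
satisfying the commutation rule `∂·p = σ(p)·∂ + δ(p)`, where `σ` is a ring
endomorphism of `R[x]` and `δ` a `σ`-derivation, both not increasing the degree
in `x`.  Every element of `A` is uniquely of the form `Σ ℓ_i ∂^i` (field `coeffs`). -/
structure OreAlg (R : Type*) [CommRing R] (A : Type*) [Ring A] where
  σ : Polynomial R →+* Polynomial R
  δ : Polynomial R →+ Polynomial R
  leibniz : ∀ p q : Polynomial R, δ (p * q) = σ p * δ q + δ p * q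
  σdeg : ∀ p : Polynomial R, (σ p).degree ≤ p.degree
  δdeg : ∀ p : Polynomial R, (δ p).degree ≤ p.degree
  ι : Polynomial R →+* A
  pd : A
  comm : ∀ p : Polynomial R, pd * ι p = ι (σ p) * pd + ι (δ p)
  coeffs : A ≃+ (ℕ →₀ Polynomial R)
  coeffs_symm_apply : ∀ c : ℕ →₀ Polynomial R,
    coeffs.symm c = c.sum fun i p => ι p * pd ^ i

namespace OreAlg

variable {R A : Type*} [CommRing R] [Ring A] (O : OreAlg R A)

/-- The order of an operator: the largest `i` with `ℓ_i ≠ 0`. -/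
noncomputable def ord (L : A) : ℕ := (O.coeffs L).support.sup id

/-- The degree of an operator: the largest `x`-degree among its coefficients. -/
noncomputable def deg (L : A) : ℕ := (O.coeffs L).support.sup fun i => ((O.coeffs L) i).natDegree

/-- The leading coefficient of an operator. -/
noncomputable def lc (L : A) : Polynomial R := (O.coeffs L) (O.ord L)

end OreAlg

open Polynomial

/-- A height function on an integral domain `R`. -/
structure HeightFn (R : Type*) [CommRing R] where
  h : R → ℝ
  h_zero : h 0 = 0
  h_nonneg : ∀ a, 0 ≤ h a
  h_neg : ∀ a, h (-a) = h a
  h_mul : ∀ a b, h (a * b) ≤ h a + h b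
  h_sum : ∀ (n : ℕ) (f : Fin n → R) (B : ℝ), 0 ≤ B → (∀ i, h (f i) ≤ B) →
    h (∑ i, f i) ≤ h ((n - 1 : ℕ) : R) + B

namespace HeightFn

variable {R : Type*} [CommRing R] (H : HeightFn R)

/-- Height of a natural number, viewed inside `R`. -/
def hN (n : ℕ) : ℝ := H.h (n : R)

/-- Height of a polynomial: the maximum height of its coefficients. -/
def hp (p : R[X]) : ℝ := p.support.fold max 0 fun i => H.h (p.coeff i)

end HeightFn

open Polynomial

namespace DFinite

variable {R : Type*} [CommRing R] {n : ℕ}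

/-- The ring `𝐑 = R[x][y_{i,j} : i = 1..n, j ≥ 0]`. -/
abbrev MvR (R : Type*) [CommRing R] (n : ℕ) := MvPolynomial (Fin n × ℕ) (Polynomial R)

/-- The `x`-degree of an element of `𝐑`. -/
noncomputable def degx (P : MvR R n) : ℕ := P.support.sup fun m => (MvPolynomial.coeff m P).natDegree

/-- The height (with respect to a height function on `R`) of an element of `𝐑`:
the maximum height of all elements of `R` appearing as coefficients. -/
noncomputable def mvHeight (H : HeightFn R) (P : MvR R n) : ℝ :=
  P.support.fold max 0 fun m => H.hp (MvPolynomial.coeff m P)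

/-- The total degree of a monomial in the `i`-th group `y_{i,0}, y_{i,1}, …` of
variables. -/
def gdeg (i : Fin n) (m : (Fin n × ℕ) →₀ ℕ) : ℕ := m.sum fun v e => if v.1 = i then e else 0

/-- `P` is homogeneous of multi-degree `Dv`, i.e. homogeneous of degree `Dv i` with
respect to each group `y_{i,0}, y_{i,1}, …` of variables. -/
def GHomog (P : MvR R n) (Dv : Fin n → ℕ) : Prop :=
  ∀ m ∈ P.support, ∀ i, gdeg i m = Dv i

end DFinite

namespace DFinite

variable {R A : Type*} [CommRing R] [Ring A] {n : ℕ}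

/-- Action of an operator `L = Σ ℓ_i ∂^i ∈ R[x][∂]` on `𝐑`, via a given action
`Dact` of `∂` on `𝐑`. -/
noncomputable def actMv (O : OreAlg R A) (Dact : MvR R n →+ MvR R n) (L : A) (P : MvR R n) :
    MvR R n :=
  (O.coeffs L).sum fun i p => MvPolynomial.C p * (⇑Dact)^[i] P

/-- The ideal `𝔞 ⊆ 𝐑` generated by `∂^j L_i · y_{i,0}` for all `i = 1..n`, `j ≥ 0`. -/
noncomputable def annIdeal (O : OreAlg R A) (Dact : MvR R n →+ MvR R n) (L : Fin n → A) :
    Ideal (MvR R n) :=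
  Ideal.span {Q | ∃ (i : Fin n) (j : ℕ),
    Q = (⇑Dact)^[j] (actMv O Dact (L i) (MvPolynomial.X (i, 0)))}

/-- `p^{[m]} := p·σ(p)···σ^{m−1}(p)`. -/
noncomputable def rising (σ : Polynomial R →+* Polynomial R) (p : Polynomial R) (m : ℕ) :
    Polynomial R :=
  ∏ k ∈ Finset.range m, (⇑σ)^[k] p

end DFinite


namespace DFinite

open Polynomial

section Basic
variable {R : Type*} [CommRing R] {n : ℕ}

lemma natDegree_coeff_le_degx (P : MvR R n) (m : (Fin n × ℕ) →₀ ℕ) :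
    (MvPolynomial.coeff m P).natDegree ≤ degx P := by
  by_cases h : m ∈ P.support
  · exact Finset.le_sup (f := fun m => (MvPolynomial.coeff m P).natDegree) h
  · simp [MvPolynomial.notMem_support_iff.mp h]

lemma degx_le_of_forall {P : MvR R n} {d : ℕ}
    (h : ∀ m, (MvPolynomial.coeff m P).natDegree ≤ d) : degx P ≤ d :=
  Finset.sup_le fun m _ => h m

lemma degx_add_le (P Q : MvR R n) : degx (P + Q) ≤ max (degx P) (degx Q) := by
  refine degx_le_of_forall fun m => ?_
  rw [MvPolynomial.coeff_add]
  exact (natDegree_add_le _ _).trans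
    (max_le_max (natDegree_coeff_le_degx _ _) (natDegree_coeff_le_degx _ _))

lemma degx_neg (P : MvR R n) : degx (-P) = degx P := by
  unfold degx; rw [MvPolynomial.support_neg]; congr 1; ext m
  rw [MvPolynomial.coeff_neg, natDegree_neg]

lemma degx_sub_le (P Q : MvR R n) : degx (P - Q) ≤ max (degx P) (degx Q) := by
  rw [sub_eq_add_neg]
  exact (degx_add_le _ _).trans (by rw [degx_neg])

lemma degx_sum_le {ι : Type*} {s : Finset ι} {f : ι → MvR R n} {d : ℕ}
    (h : ∀ k ∈ s, degx (f k) ≤ d) : degx (∑ k ∈ s, f k) ≤ d := by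
  classical
  induction s using Finset.induction with
  | empty => simp only [Finset.sum_empty]; simp [degx]
  | insert _ _ hk ih =>
    rw [Finset.sum_insert hk]
    refine (degx_add_le _ _).trans (max_le (h _ (Finset.mem_insert_self _ _)) ?_)
    exact ih fun k hks => h k (Finset.mem_insert_of_mem hks)

lemma degx_C_mul_le (p : Polynomial R) (P : MvR R n) :
    degx (MvPolynomial.C p * P) ≤ p.natDegree + degx P := by
  refine degx_le_of_forall fun m => ?_
  rw [MvPolynomial.coeff_C_mul]
  exact (natDegree_mul_le).trans (add_le_add_right (natDegree_coeff_le_degx _ _) _)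

lemma degx_monomial_le (μ : (Fin n × ℕ) →₀ ℕ) (c : Polynomial R) :
    degx (MvPolynomial.monomial μ c) ≤ c.natDegree := by
  refine degx_le_of_forall fun m => ?_
  rw [MvPolynomial.coeff_monomial]
  split <;> simp

lemma support_C_mul_subset (p : Polynomial R) (P : MvR R n) :
    (MvPolynomial.C p * P).support ⊆ P.support := by
  intro m hm
  rw [MvPolynomial.mem_support_iff, MvPolynomial.coeff_C_mul] at hm
  rw [MvPolynomial.mem_support_iff]
  exact fun h => hm (by rw [h, mul_zero])

lemma support_sum_subset {ι : Type*} {s : Finset ι} (f : ι → MvR R n) :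
    (∑ k ∈ s, f k).support ⊆ s.biUnion fun k => (f k).support := by
  classical
  induction s using Finset.induction with
  | empty => simp
  | insert _ _ hk ih =>
    rw [Finset.sum_insert hk, Finset.biUnion_insert]
    exact MvPolynomial.support_add.trans (Finset.union_subset_union le_rfl ih)

lemma eq_of_mem_support_monomial {μ ν : (Fin n × ℕ) →₀ ℕ} {c : Polynomial R}
    (h : μ ∈ (MvPolynomial.monomial ν c).support) : μ = ν := by
  rw [MvPolynomial.mem_support_iff, MvPolynomial.coeff_monomial] at h
  by_contra hne
  rw [if_neg (fun hh => hne hh.symm)] at h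
  exact h rfl

lemma forall_support_add {P Q : MvR R n} {Φ : ((Fin n × ℕ) →₀ ℕ) → Prop}
    (hP : ∀ μ ∈ P.support, Φ μ) (hQ : ∀ μ ∈ Q.support, Φ μ) :
    ∀ μ ∈ (P + Q).support, Φ μ := fun μ hμ =>
  (Finset.mem_union.mp (MvPolynomial.support_add hμ)).elim (hP μ) (hQ μ)

lemma gdeg_add (i : Fin n) (a b : (Fin n × ℕ) →₀ ℕ) :
    gdeg i (a + b) = gdeg i a + gdeg i b := by
  unfold gdeg
  exact Finsupp.sum_add_index' (fun v => by simp) (fun v e₁ e₂ => by split <;> simp)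

lemma gdeg_single (i i₀ : Fin n) (j e : ℕ) :
    gdeg i (Finsupp.single (i₀, j) e) = if i₀ = i then e else 0 := by
  unfold gdeg
  rw [Finsupp.sum_single_index (by simp)]

lemma apply_le_gdeg (m : (Fin n × ℕ) →₀ ℕ) (i : Fin n) (j : ℕ) :
    m (i, j) ≤ gdeg i m := by
  by_cases h : (i, j) ∈ m.support
  · unfold gdeg Finsupp.sum
    calc m (i, j) = if (i,j).1 = i then m (i,j) else 0 := by simp
    _ ≤ _ := Finset.single_le_sum (f := fun v => if v.1 = i then m v else 0)
        (fun v _ => Nat.zero_le _) h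
  · simp [Finsupp.notMem_support_iff.mp h]

end Basic

section Main
variable {R A : Type*} [CommRing R] [Ring A] {n : ℕ}
variable (O : OreAlg R A) (Dact : MvR R n →+ MvR R n)
variable (hXrule : ∀ (i : Fin n) (j : ℕ),
      Dact (MvPolynomial.X (i, j)) = MvPolynomial.X (i, j + 1))
variable (hCrule : ∀ (p : Polynomial R) (P : MvR R n),
      Dact (MvPolynomial.C p * P) =
        MvPolynomial.C (O.σ p) * Dact P + MvPolynomial.C (O.δ p) * P)

include hXrule in
lemma Dact_iter_X (i : Fin n) (j k : ℕ) :
    (⇑Dact)^[k] (MvPolynomial.X (i, j)) = MvPolynomial.X (i, j + k) := by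
  induction k with
  | zero => rfl
  | succ k ih =>
    rw [Function.iterate_succ_apply', ih, hXrule]
    exact congrArg (fun t => (MvPolynomial.X (i,t) : MvR R n)) (by omega)

noncomputable def shf {R : Type*} [CommRing R] (σ : Polynomial R →+* Polynomial R)
    (g : ℕ → Polynomial R) : ℕ → Polynomial R
  | 0 => 0
  | (k+1) => σ (g k)

lemma shf_zero {R : Type*} [CommRing R] (σ : Polynomial R →+* Polynomial R)
    (g : ℕ → Polynomial R) : shf σ g 0 = 0 := rfl
lemma shf_succ {R : Type*} [CommRing R] (σ : Polynomial R →+* Polynomial R)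
    (g : ℕ → Polynomial R) (k : ℕ) : shf σ g (k+1) = σ (g k) := rfl

lemma natDegree_iter_sigma_le (p : Polynomial R) (m : ℕ) :
    (((⇑O.σ)^[m]) p).natDegree ≤ p.natDegree := by
  induction m with
  | zero => exact le_rfl
  | succ m ih =>
    rw [Function.iterate_succ_apply']
    exact (natDegree_le_natDegree (O.σdeg _)).trans ih

lemma natDegree_lc_le (L : A) : (O.lc L).natDegree ≤ O.deg L := by
  by_cases h : O.ord L ∈ (O.coeffs L).support
  · exact Finset.le_sup (f := fun i => ((O.coeffs L) i).natDegree) h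
  · simp [OreAlg.lc, Finsupp.notMem_support_iff.mp h]

include hXrule hCrule in
lemma G_structure (L : A) (i : Fin n) (j : ℕ) :
    ∃ g : ℕ → Polynomial R,
      (∀ k, (g k).natDegree ≤ O.deg L) ∧
      g (O.ord L + j) = (⇑O.σ)^[j] (O.lc L) ∧
      (∀ k, O.ord L + j < k → g k = 0) ∧
      (⇑Dact)^[j] (actMv O Dact L (MvPolynomial.X (i,0))) =
        ∑ k ∈ Finset.range (O.ord L + j + 1), MvPolynomial.C (g k) * MvPolynomial.X (i,k) := by
  induction j with
  | zero =>
    refine ⟨fun k => (O.coeffs L) k, fun k => ?_, rfl, fun k hk => ?_, ?_⟩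
    · by_cases h : k ∈ (O.coeffs L).support
      · exact Finset.le_sup (f := fun i => ((O.coeffs L) i).natDegree) h
      · simp [Finsupp.notMem_support_iff.mp h]
    · refine Finsupp.notMem_support_iff.mp fun h => ?_
      have : k ≤ O.ord L := Finset.le_sup (f := id) h
      omega
    · rw [Function.iterate_zero_apply, actMv, Finsupp.sum]
      rw [Finset.sum_subset (fun k hk => Finset.mem_range.mpr
        (Nat.lt_succ_of_le (Finset.le_sup (f := id) hk)))]
      · exact Finset.sum_congr rfl fun k _ => by rw [Dact_iter_X Dact hXrule, Nat.zero_add]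
      · intro k _ hk
        rw [Finsupp.notMem_support_iff.mp hk]
        simp
  | succ j ih =>
    obtain ⟨g, hdeg, htop, hvan, heq⟩ := ih
    set r := O.ord L with hr
    refine ⟨fun k => shf O.σ g k + O.δ (g k), fun k => ?_, ?_, fun k hk => ?_, ?_⟩
    · refine (natDegree_add_le _ _).trans (max_le ?_ ?_)
      · cases k with
        | zero => simp [shf_zero]
        | succ k => exact (shf_succ O.σ g k ▸ (natDegree_le_natDegree (O.σdeg _)).trans (hdeg k))
      · exact (natDegree_le_natDegree (O.δdeg _)).trans (hdeg _)
    · show shf O.σ g (r + (j+1)) + O.δ (g (r + (j+1))) = _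
      rw [show shf O.σ g (r + (j+1)) = O.σ (g (r+j)) from rfl, htop,
        hvan (r + (j+1)) (by omega), map_zero, add_zero]
      exact (Function.iterate_succ_apply' _ _ _).symm
    · cases k with
      | zero => omega
      | succ k =>
        show shf O.σ g (k+1) + O.δ (g (k+1)) = 0
        rw [shf_succ, hvan k (by omega), hvan (k+1) (by omega), map_zero, map_zero, add_zero]
    · rw [Function.iterate_succ_apply', heq, map_sum]
      have step : ∀ k, Dact (MvPolynomial.C (g k) * MvPolynomial.X (i,k)) =
          MvPolynomial.C (O.σ (g k)) * MvPolynomial.X (i,k+1)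
            + MvPolynomial.C (O.δ (g k)) * MvPolynomial.X (i,k) := by
        intro k; rw [hCrule, hXrule]
      simp only [step]
      rw [Finset.sum_add_distrib]
      have h1 : ∑ k ∈ Finset.range (r + j + 1),
          MvPolynomial.C (O.σ (g k)) * MvPolynomial.X (i, k+1)
          = ∑ k ∈ Finset.range (r + (j+1) + 1),
            MvPolynomial.C (shf O.σ g k) * MvPolynomial.X (i, k) := by
        conv_rhs => rw [show r + (j+1) + 1 = (r + j + 1) + 1 by omega, Finset.sum_range_succ']
        simp only [shf_succ, shf_zero, map_zero, zero_mul, add_zero]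
      have h2 : ∑ k ∈ Finset.range (r + j + 1),
          MvPolynomial.C (O.δ (g k)) * MvPolynomial.X (i, k)
          = ∑ k ∈ Finset.range (r + (j+1) + 1),
            MvPolynomial.C (O.δ (g k)) * MvPolynomial.X (i, k) := by
        conv_rhs => rw [show r + (j+1) + 1 = (r + j + 1) + 1 by omega, Finset.sum_range_succ]
        rw [hvan (r + j + 1) (by omega), map_zero, map_zero, zero_mul, add_zero]
      rw [h1, h2, ← Finset.sum_add_distrib]
      exact Finset.sum_congr rfl fun k _ => by rw [map_add, add_mul]

end Main
section Main2
variable {R A : Type*} [CommRing R] [Ring A] {n : ℕ}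
variable (O : OreAlg R A) (Dact : MvR R n →+ MvR R n) (L : Fin n → A)
variable (hXrule : ∀ (i : Fin n) (j : ℕ),
      Dact (MvPolynomial.X (i, j)) = MvPolynomial.X (i, j + 1))
variable (hCrule : ∀ (p : Polynomial R) (P : MvR R n),
      Dact (MvPolynomial.C p * P) =
        MvPolynomial.C (O.σ p) * Dact P + MvPolynomial.C (O.δ p) * P)

include hXrule hCrule in
lemma term_reduce (m : ℕ) (i₀ : Fin n) (mon : (Fin n × ℕ) →₀ ℕ) (c : Polynomial R)
    (hpos : 0 < mon (i₀, O.ord (L i₀) + m)) :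
    ∃ T₂ : MvR R n,
      (∀ μ ∈ T₂.support, ∃ k < O.ord (L i₀) + m,
        μ = (mon - Finsupp.single (i₀, O.ord (L i₀) + m) 1) + Finsupp.single (i₀, k) 1) ∧
      degx T₂ ≤ c.natDegree + O.deg (L i₀) ∧
      MvPolynomial.C ((⇑O.σ)^[m] (O.lc (L i₀))) * MvPolynomial.monomial mon c - T₂
        ∈ annIdeal O Dact L := by
  obtain ⟨g, hdeg, htop, hvan, heq⟩ := G_structure O Dact hXrule hCrule (L i₀) i₀ m
  set t₀ := O.ord (L i₀) + m with ht₀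
  set mon' := mon - Finsupp.single (i₀, t₀) 1 with hmon'
  have hmon : mon = mon' + Finsupp.single (i₀, t₀) 1 := by
    rw [hmon']
    exact (tsub_add_cancel_of_le (Finsupp.single_le_iff.mpr hpos)).symm
  refine ⟨-(∑ k ∈ Finset.range t₀, MvPolynomial.C (g k) *
      MvPolynomial.monomial (mon' + Finsupp.single (i₀, k) 1) c), ?_, ?_, ?_⟩
  · intro μ hμ
    rw [MvPolynomial.support_neg] at hμ
    obtain ⟨k, hk1, hk2⟩ := Finset.mem_biUnion.mp (support_sum_subset _ hμ)
    exact ⟨k, Finset.mem_range.mp hk1,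
      eq_of_mem_support_monomial (support_C_mul_subset _ _ hk2)⟩
  · rw [degx_neg]
    refine degx_sum_le fun k _ => (degx_C_mul_le _ _).trans ?_
    calc (g k).natDegree + degx (MvPolynomial.monomial (mon' + Finsupp.single (i₀, k) 1) c)
        ≤ O.deg (L i₀) + c.natDegree := add_le_add (hdeg k) (degx_monomial_le _ _)
      _ = c.natDegree + O.deg (L i₀) := add_comm _ _
  · have key : MvPolynomial.C ((⇑O.σ)^[m] (O.lc (L i₀))) * MvPolynomial.monomial mon c
        - (-(∑ k ∈ Finset.range t₀, MvPolynomial.C (g k) *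
            MvPolynomial.monomial (mon' + Finsupp.single (i₀, k) 1) c))
        = MvPolynomial.monomial mon' c *
            ((⇑Dact)^[m] (actMv O Dact (L i₀) (MvPolynomial.X (i₀,0)))) := by
      rw [heq, Finset.mul_sum, Finset.sum_range_succ, htop]
      have hterm : ∀ k, MvPolynomial.monomial mon' c *
          (MvPolynomial.C (g k) * MvPolynomial.X (i₀, k))
          = MvPolynomial.C (g k) *
            MvPolynomial.monomial (mon' + Finsupp.single (i₀, k) 1) c := by
        intro k
        rw [MvPolynomial.X, MvPolynomial.C_mul_monomial, MvPolynomial.C_mul_monomial]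
        rw [show (MvPolynomial.monomial mon') c * MvPolynomial.monomial (Finsupp.single (i₀,k) 1) (g k * 1)
          = MvPolynomial.monomial (mon' + Finsupp.single (i₀,k) 1) (c * (g k * 1)) from
            MvPolynomial.monomial_mul]
        rw [mul_one, mul_comm c (g k)]
      rw [Finset.sum_congr rfl fun k _ => hterm k]
      have hlast : MvPolynomial.monomial mon' c *
          (MvPolynomial.C ((⇑O.σ)^[m] (O.lc (L i₀))) * MvPolynomial.X (i₀, t₀))
          = MvPolynomial.C ((⇑O.σ)^[m] (O.lc (L i₀))) * MvPolynomial.monomial mon c := by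
        rw [MvPolynomial.X, MvPolynomial.C_mul_monomial, MvPolynomial.C_mul_monomial]
        rw [show (MvPolynomial.monomial mon') c * MvPolynomial.monomial (Finsupp.single (i₀,t₀) 1) ((⇑O.σ)^[m] (O.lc (L i₀)) * 1)
          = MvPolynomial.monomial (mon' + Finsupp.single (i₀,t₀) 1) (c * ((⇑O.σ)^[m] (O.lc (L i₀)) * 1)) from
            MvPolynomial.monomial_mul]
        rw [← hmon, mul_one, mul_comm c _]
      rw [hlast]
      ring
    rw [key]
    exact Ideal.mul_mem_left _ _ (Ideal.subset_span ⟨i₀, m, rfl⟩)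

end Main2
section Main3
variable {R A : Type*} [CommRing R] [Ring A] {n : ℕ}
variable (O : OreAlg R A) (Dact : MvR R n →+ MvR R n) (L : Fin n → A)

lemma no_top_case (m : ℕ) (b : Fin n → ℕ) (P : MvR R n) (Ev : Fin n → ℕ)
    (hhom : GHomog P Ev)
    (hvars : ∀ mon ∈ P.support, ∀ v ∈ mon.support, v.2 < O.ord (L v.1) + m + 1)
    (hnotop : ∀ mon ∈ P.support, ∀ i, mon (i, O.ord (L i) + m) = 0) :
    ∃ Q : MvR R n, GHomog Q Ev ∧
      (∀ mon ∈ Q.support, ∀ v ∈ mon.support, v.2 < O.ord (L v.1) + m) ∧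
      degx Q ≤ degx P + ∑ i, b i * O.deg (L i) ∧
      MvPolynomial.C (∏ i, ((⇑O.σ)^[m] (O.lc (L i))) ^ b i) * P - Q ∈ annIdeal O Dact L := by
  refine ⟨MvPolynomial.C (∏ i, ((⇑O.σ)^[m] (O.lc (L i))) ^ b i) * P,
    fun μ hμ => hhom μ (support_C_mul_subset _ _ hμ), ?_, ?_, by
      rw [sub_self]; exact Ideal.zero_mem _⟩
  · intro mon hmon v hv
    have hmon' := support_C_mul_subset _ _ hmon
    have h1 := hvars mon hmon' v hv
    rcases Nat.lt_succ_iff_lt_or_eq.mp h1 with h | h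
    · exact h
    · exfalso
      have hz := hnotop mon hmon' v.1
      have : v = (v.1, O.ord (L v.1) + m) := Prod.ext rfl h
      rw [← this] at hz
      exact (Finsupp.mem_support_iff.mp hv) hz
  · refine (degx_C_mul_le _ _).trans ?_
    rw [add_comm]
    refine add_le_add le_rfl ?_
    refine (Polynomial.natDegree_prod_le _ _).trans (Finset.sum_le_sum fun i _ => ?_)
    exact (Polynomial.natDegree_pow_le).trans
      (Nat.mul_le_mul le_rfl ((natDegree_iter_sigma_le O _ m).trans (natDegree_lc_le O _)))

end Main3
section Main4
variable {R A : Type*} [CommRing R] [Ring A] {n : ℕ}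
variable (O : OreAlg R A) (Dact : MvR R n →+ MvR R n) (L : Fin n → A)
variable (hXrule : ∀ (i : Fin n) (j : ℕ),
      Dact (MvPolynomial.X (i, j)) = MvPolynomial.X (i, j + 1))
variable (hCrule : ∀ (p : Polynomial R) (P : MvR R n),
      Dact (MvPolynomial.C p * P) =
        MvPolynomial.C (O.σ p) * Dact P + MvPolynomial.C (O.δ p) * P)

include hXrule hCrule in
lemma reduce_inner (m : ℕ) :
    ∀ (s N : ℕ) (b : Fin n → ℕ) (P : MvR R n) (Ev : Fin n → ℕ),
    (∑ i, b i) ≤ s →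
    (∑ mon ∈ P.support, ∑ i, mon (i, O.ord (L i) + m)) ≤ N →
    GHomog P Ev →
    (∀ mon ∈ P.support, ∀ v ∈ mon.support, v.2 < O.ord (L v.1) + m + 1) →
    (∀ mon ∈ P.support, ∀ i, mon (i, O.ord (L i) + m) ≤ b i) →
    ∃ Q : MvR R n, GHomog Q Ev ∧
      (∀ mon ∈ Q.support, ∀ v ∈ mon.support, v.2 < O.ord (L v.1) + m) ∧
      degx Q ≤ degx P + ∑ i, b i * O.deg (L i) ∧
      MvPolynomial.C (∏ i, ((⇑O.σ)^[m] (O.lc (L i))) ^ b i) * P - Q ∈ annIdeal O Dact L := by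
  intro s
  induction s with
  | zero =>
    intro N b P Ev hs hN hhom hvars htopb
    have hb : ∀ i, b i = 0 := by
      intro i
      have := Finset.single_le_sum (f := b) (fun i _ => Nat.zero_le _) (Finset.mem_univ i)
      omega
    exact no_top_case O Dact L m b P Ev hhom hvars
      (fun mon hmon i => Nat.le_zero.mp (hb i ▸ htopb mon hmon i))
  | succ s ihs =>
    intro N
    induction N with
    | zero =>
      intro b P Ev hs hN hhom hvars htopb
      refine no_top_case O Dact L m b P Ev hhom hvars (fun mon hmon i => ?_)
      have h1 : (∑ i, mon (i, O.ord (L i) + m))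
          ≤ ∑ mon' ∈ P.support, ∑ i, mon' (i, O.ord (L i) + m) :=
        Finset.single_le_sum (f := fun mon' : (Fin n × ℕ) →₀ ℕ => ∑ i, mon' (i, O.ord (L i) + m))
          (fun _ _ => Nat.zero_le _) hmon
      have h2 : mon (i, O.ord (L i) + m) ≤ ∑ j, mon (j, O.ord (L j) + m) :=
        Finset.single_le_sum (f := fun j => mon (j, O.ord (L j) + m))
          (fun _ _ => Nat.zero_le _) (Finset.mem_univ i)
      omega
    | succ N ihN =>
      intro b P Ev hs hN hhom hvars htopb
      classical
      by_cases hnt : ∀ mon ∈ P.support, ∀ i, mon (i, O.ord (L i) + m) = 0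
      · exact no_top_case O Dact L m b P Ev hhom hvars hnt
      push_neg at hnt
      obtain ⟨mon, hmonP, i₀, hi₀⟩ := hnt
      set t₀ := O.ord (L i₀) + m with ht₀
      have hpos : 0 < mon (i₀, t₀) := Nat.pos_of_ne_zero hi₀
      set c := MvPolynomial.coeff mon P with hc
      set T : MvR R n := MvPolynomial.monomial mon c with hT
      set P' := P - T with hP'
      have hPsplit : P = T + P' := by rw [hP']; ring
      have hsupP' : P'.support ⊆ P.support.erase mon := by
        intro μ hμ
        have hco : MvPolynomial.coeff μ P' =
            MvPolynomial.coeff μ P - (if mon = μ then c else 0) := by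
          rw [hP', MvPolynomial.coeff_sub, hT, MvPolynomial.coeff_monomial]
        rw [MvPolynomial.mem_support_iff] at hμ
        by_cases hμm : μ = mon
        · subst hμm
          rw [if_pos rfl, hc, sub_self] at hco
          exact absurd hco hμ
        · refine Finset.mem_erase.mpr ⟨hμm, MvPolynomial.mem_support_iff.mpr ?_⟩
          rw [if_neg (fun h => hμm h.symm), sub_zero] at hco
          rwa [← hco]
      have hsubP' : ∀ μ ∈ P'.support, μ ∈ P.support :=
        fun μ hμ => Finset.mem_of_mem_erase (hsupP' hμ)
      have hNP' : (∑ μ ∈ P'.support, ∑ i, μ (i, O.ord (L i) + m)) ≤ N := by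
        have h1 : ∑ μ ∈ P'.support, ∑ i, μ (i, O.ord (L i) + m)
            ≤ ∑ μ ∈ P.support.erase mon, ∑ i, μ (i, O.ord (L i) + m) :=
          Finset.sum_le_sum_of_subset hsupP'
        have h2 : (∑ i, mon (i, O.ord (L i) + m)) +
            ∑ μ ∈ P.support.erase mon, ∑ i, μ (i, O.ord (L i) + m)
            = ∑ μ ∈ P.support, ∑ i, μ (i, O.ord (L i) + m) :=
          Finset.add_sum_erase P.support
            (fun μ => ∑ i, μ (i, O.ord (L i) + m)) hmonP
        have h3 : 0 < ∑ i, mon (i, O.ord (L i) + m) := lt_of_lt_of_le hpos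
          (Finset.single_le_sum (f := fun i => mon (i, O.ord (L i) + m))
            (fun _ _ => Nat.zero_le _) (Finset.mem_univ i₀))
        omega
      obtain ⟨Q', hQ'hom, hQ'var, hQ'deg, hQ'mem⟩ := ihN b P' Ev hs hNP'
        (fun μ hμ => hhom μ (hsubP' μ hμ))
        (fun μ hμ => hvars μ (hsubP' μ hμ))
        (fun μ hμ => htopb μ (hsubP' μ hμ))
      obtain ⟨T₂, hT₂sup, hT₂deg, hT₂mem⟩ :=
        term_reduce O Dact L hXrule hCrule m i₀ mon c hpos
      have hbi₀ : 1 ≤ b i₀ := le_trans hpos (htopb mon hmonP i₀)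
      have hbsplit : b i₀ = (b i₀ - 1) + 1 := by omega
      set b' := Function.update b i₀ (b i₀ - 1) with hb'
      have hb'eq : ∀ i, i ≠ i₀ → b' i = b i := fun i hi => Function.update_of_ne hi _ _
      have hb'i₀ : b' i₀ = b i₀ - 1 := Function.update_self _ _ _
      have hsum_erase : ∀ f g : Fin n → ℕ, (∀ i, i ≠ i₀ → f i = g i) →
          ∑ i ∈ Finset.univ.erase i₀, f i = ∑ i ∈ Finset.univ.erase i₀, g i :=
        fun f g h => Finset.sum_congr rfl fun i hi => h i (Finset.ne_of_mem_erase hi)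
      have hb's : (∑ i, b' i) ≤ s := by
        have e1 := Finset.add_sum_erase Finset.univ b' (Finset.mem_univ i₀)
        have e2 := Finset.add_sum_erase Finset.univ b (Finset.mem_univ i₀)
        have e3 := hsum_erase b' b hb'eq
        omega
      set mon'' := mon - Finsupp.single (i₀, t₀) 1 with hmon''
      have hmon_eq : mon = mon'' + Finsupp.single (i₀, t₀) 1 := by
        rw [hmon'']
        exact (tsub_add_cancel_of_le (Finsupp.single_le_iff.mpr hpos)).symm
      have hmon''le : ∀ v, mon'' v ≤ mon v := fun v => by
        rw [hmon'', Finsupp.tsub_apply]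
        exact Nat.sub_le _ _
      have hT₂hom : GHomog T₂ Ev := by
        intro μ hμ i
        obtain ⟨k, hk, hμeq⟩ := hT₂sup μ hμ
        have h1 : gdeg i mon = Ev i := hhom mon hmonP i
        rw [hμeq, gdeg_add, gdeg_single]
        rw [hmon_eq, gdeg_add, gdeg_single] at h1
        exact h1
      have hT₂vars : ∀ μ ∈ T₂.support, ∀ v ∈ μ.support, v.2 < O.ord (L v.1) + m + 1 := by
        intro μ hμ v hv
        obtain ⟨k, hk, hμeq⟩ := hT₂sup μ hμ
        rw [hμeq] at hv
        rcases Finset.mem_union.mp (Finsupp.support_add hv) with h | h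
        · refine hvars mon hmonP v ?_
          have h1 := hmon''le v
          rw [Finsupp.mem_support_iff] at h ⊢
          omega
        · have h2 := Finsupp.support_single_subset h
          rw [Finset.mem_singleton] at h2
          subst h2
          show k < O.ord (L i₀) + m + 1
          omega
      have hT₂topb : ∀ μ ∈ T₂.support, ∀ i, μ (i, O.ord (L i) + m) ≤ b' i := by
        intro μ hμ i
        obtain ⟨k, hk, hμeq⟩ := hT₂sup μ hμ
        have hsk : (Finsupp.single (i₀, k) 1 : (Fin n × ℕ) →₀ ℕ) (i, O.ord (L i) + m) = 0 := by
          rw [Finsupp.single_apply, if_neg]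
          intro hpair
          rw [Prod.mk.injEq] at hpair
          obtain ⟨h1, h2⟩ := hpair
          subst h1
          omega
        rw [hμeq, Finsupp.add_apply, hsk, add_zero, hmon'', Finsupp.tsub_apply]
        by_cases hii : i = i₀
        · subst hii
          have hstop : (Finsupp.single (i, t₀) 1 : (Fin n × ℕ) →₀ ℕ) (i, O.ord (L i) + m) = 1 := by
            rw [Finsupp.single_apply, if_pos (by rw [ht₀])]
          rw [hstop, hb'i₀]
          have := htopb mon hmonP i
          omega
        · have hstop : (Finsupp.single (i₀, t₀) 1 : (Fin n × ℕ) →₀ ℕ) (i, O.ord (L i) + m) = 0 := by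
            rw [Finsupp.single_apply, if_neg]
            intro hpair
            rw [Prod.mk.injEq] at hpair
            exact hii hpair.1.symm
          rw [hstop, Nat.sub_zero, hb'eq i hii]
          exact htopb mon hmonP i
      obtain ⟨QT, hQThom, hQTvar, hQTdeg, hQTmem⟩ := ihs
        (∑ μ ∈ T₂.support, ∑ i, μ (i, O.ord (L i) + m)) b' T₂ Ev hb's le_rfl
        hT₂hom hT₂vars hT₂topb
      have hdegc : c.natDegree ≤ degx P := natDegree_coeff_le_degx P mon
      have hdT₂ : degx T₂ ≤ degx P + O.deg (L i₀) :=
        hT₂deg.trans (add_le_add_left hdegc _)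
      have keydeg : ∑ i, b i * O.deg (L i) = O.deg (L i₀) + ∑ i, b' i * O.deg (L i) := by
        rw [← Finset.add_sum_erase _ (fun i => b i * O.deg (L i)) (Finset.mem_univ i₀),
          ← Finset.add_sum_erase _ (fun i => b' i * O.deg (L i)) (Finset.mem_univ i₀),
          hsum_erase (fun i => b' i * O.deg (L i)) (fun i => b i * O.deg (L i))
            (fun i hi => by show b' i * O.deg (L i) = b i * O.deg (L i); rw [hb'eq i hi]),
          hb'i₀]
        conv_lhs => rw [hbsplit]
        ring
      have hprod_erase : (∏ i ∈ Finset.univ.erase i₀, ((⇑O.σ)^[m] (O.lc (L i))) ^ b' i)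
          = ∏ i ∈ Finset.univ.erase i₀, ((⇑O.σ)^[m] (O.lc (L i))) ^ b i :=
        Finset.prod_congr rfl fun i hi => by
          rw [hb'eq i (Finset.ne_of_mem_erase hi)]
      have hq : (∏ i, ((⇑O.σ)^[m] (O.lc (L i))) ^ b i) =
          ((⇑O.σ)^[m] (O.lc (L i₀))) * ∏ i, ((⇑O.σ)^[m] (O.lc (L i))) ^ b' i := by
        rw [← Finset.mul_prod_erase _ (fun i => ((⇑O.σ)^[m] (O.lc (L i))) ^ b i)
            (Finset.mem_univ i₀),
          ← Finset.mul_prod_erase _ (fun i => ((⇑O.σ)^[m] (O.lc (L i))) ^ b' i)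
            (Finset.mem_univ i₀),
          hprod_erase, hb'i₀]
        conv_lhs => rw [hbsplit]
        rw [pow_succ]
        ring
      refine ⟨QT + Q', forall_support_add hQThom hQ'hom,
        forall_support_add hQTvar hQ'var, ?_, ?_⟩
      · refine (degx_add_le _ _).trans (max_le ?_ ?_)
        · refine hQTdeg.trans ?_
          rw [keydeg]
          omega
        · refine hQ'deg.trans ?_
          have hdP' : degx P' ≤ degx P := by
            rw [hP']
            exact (degx_sub_le _ _).trans
              (max_le le_rfl ((degx_monomial_le _ _).trans hdegc))
          omega
      · have hmem1 : MvPolynomial.C (∏ i, ((⇑O.σ)^[m] (O.lc (L i))) ^ b' i) *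
            (MvPolynomial.C ((⇑O.σ)^[m] (O.lc (L i₀))) * T - T₂) ∈ annIdeal O Dact L :=
          Ideal.mul_mem_left _ _ hT₂mem
        have hCq : (MvPolynomial.C (∏ i, ((⇑O.σ)^[m] (O.lc (L i))) ^ b i) : MvR R n) =
            MvPolynomial.C ((⇑O.σ)^[m] (O.lc (L i₀))) *
              MvPolynomial.C (∏ i, ((⇑O.σ)^[m] (O.lc (L i))) ^ b' i) := by
          rw [← map_mul, hq]
        have hkey : MvPolynomial.C (∏ i, ((⇑O.σ)^[m] (O.lc (L i))) ^ b i) * P - (QT + Q')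
            = (MvPolynomial.C (∏ i, ((⇑O.σ)^[m] (O.lc (L i))) ^ b' i) *
                (MvPolynomial.C ((⇑O.σ)^[m] (O.lc (L i₀))) * T - T₂))
              + ((MvPolynomial.C (∏ i, ((⇑O.σ)^[m] (O.lc (L i))) ^ b' i) * T₂ - QT)
              + (MvPolynomial.C (∏ i, ((⇑O.σ)^[m] (O.lc (L i))) ^ b i) * P' - Q')) := by
          conv_lhs => rw [hPsplit]
          rw [hCq]
          ring
        rw [hkey]
        exact add_mem hmem1 (add_mem hQTmem hQ'mem)

end Main4
end DFinite

namespace DFinite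
section Glue
variable {R A : Type*} [CommRing R] [Ring A] {n : ℕ}
variable (O : OreAlg R A)

lemma iter_sigma_pow (p : Polynomial R) (D m : ℕ) :
    (⇑O.σ)^[m] (p ^ D) = ((⇑O.σ)^[m] p) ^ D := by
  induction m generalizing p with
  | zero => rfl
  | succ m ih =>
    rw [Function.iterate_succ_apply, Function.iterate_succ_apply, map_pow, ih]

end Glue
end DFinite

open DFinite in
/-- normal form lemma: every homogeneous `P` involving only
`y_{i,j}` with `j < r_i + m` is, after multiplication by `Π_i (p_i^{D_i})^{[m]}`,
congruent mod `𝔞` to a homogeneous `V` involving only `y_{i,j}` with `j < r_i`,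
of multi-degree at most `(D_1,…,D_n)` and `x`-degree at most
`deg_x(P) + m·Σ_i D_i·deg(L_i)`. -/
theorem normal_form_bound {R A : Type*} [CommRing R] [IsDomain R] [Ring A]
    (O : OreAlg R A) {n : ℕ} (L : Fin n → A) (hL : ∀ i, L i ≠ 0)
    (α β γ : ℤ)
    (hα : α = 0 ∨ α = 1 ∨ α = -1) (hβ : β = 0 ∨ β = 1 ∨ β = -1)
    (hγ : γ = 0 ∨ γ = 1 ∨ γ = -1)
    (Dact : MvR R n →+ MvR R n)
    (hXrule : ∀ (i : Fin n) (j : ℕ),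
      Dact (MvPolynomial.X (i, j)) = MvPolynomial.X (i, j + 1))
    (hCrule : ∀ (p : Polynomial R) (P : MvR R n),
      Dact (MvPolynomial.C p * P) =
        MvPolynomial.C (O.σ p) * Dact P + MvPolynomial.C (O.δ p) * P)
    (hmul : ∀ P Q : MvR R n,
      Dact (P * Q) = α • (Dact P * Dact Q) + β • (Dact P * Q + P * Dact Q) + γ • (P * Q))
    (m : ℕ) (P : MvR R n) (Dv : Fin n → ℕ) (hPhom : GHomog P Dv)
    (hPord : ∀ mon ∈ P.support, ∀ v ∈ mon.support, v.2 < O.ord (L v.1) + m) :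
    ∃ (V : MvR R n) (Ev : Fin n → ℕ),
      GHomog V Ev ∧ (∀ i, Ev i ≤ Dv i) ∧
      (∀ mon ∈ V.support, ∀ v ∈ mon.support, v.2 < O.ord (L v.1)) ∧
      degx V ≤ degx P + m * ∑ i, Dv i * O.deg (L i) ∧
      MvPolynomial.C (∏ i, rising O.σ (O.lc (L i) ^ Dv i) m) * P - V ∈
        annIdeal O Dact L := by
  classical
  induction m generalizing P with
  | zero =>
    refine ⟨P, Dv, hPhom, fun i => le_rfl, hPord, by simp, ?_⟩
    have h1 : (∏ i, rising O.σ (O.lc (L i) ^ Dv i) 0) = 1 := by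
      refine Finset.prod_eq_one fun i _ => ?_
      exact Finset.prod_range_zero _
    rw [h1, map_one, one_mul, sub_self]
    exact Ideal.zero_mem _
  | succ m ih =>
    obtain ⟨P₁, hP₁hom, hP₁var, hP₁deg, hP₁mem⟩ :=
      reduce_inner O Dact L hXrule hCrule m
        (∑ i, Dv i) (∑ mon ∈ P.support, ∑ i, mon (i, O.ord (L i) + m)) Dv P Dv
        le_rfl le_rfl hPhom (fun mon hmon v hv => hPord mon hmon v hv)
        (fun mon hmon i => (apply_le_gdeg mon i _).trans_eq (hPhom mon hmon i))
    obtain ⟨V, Ev, hVhom, hEv, hVvar, hVdeg, hVmem⟩ := ih P₁ hP₁hom hP₁var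
    refine ⟨V, Ev, hVhom, hEv, hVvar, ?_, ?_⟩
    · calc degx V ≤ degx P₁ + m * ∑ i, Dv i * O.deg (L i) := hVdeg
        _ ≤ (degx P + ∑ i, Dv i * O.deg (L i)) + m * ∑ i, Dv i * O.deg (L i) :=
          add_le_add_left hP₁deg _
        _ = degx P + (m + 1) * ∑ i, Dv i * O.deg (L i) := by ring
    · have hprod : (∏ i, rising O.σ (O.lc (L i) ^ Dv i) (m+1))
          = (∏ i, rising O.σ (O.lc (L i) ^ Dv i) m)
            * ∏ i, ((⇑O.σ)^[m] (O.lc (L i))) ^ Dv i := by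
        rw [← Finset.prod_mul_distrib]
        refine Finset.prod_congr rfl fun i _ => ?_
        have h1 : rising O.σ (O.lc (L i) ^ Dv i) (m+1)
            = rising O.σ (O.lc (L i) ^ Dv i) m * (⇑O.σ)^[m] (O.lc (L i) ^ Dv i) :=
          Finset.prod_range_succ _ m
        rw [h1, iter_sigma_pow]
      rw [hprod, map_mul]
      have hkey : (MvPolynomial.C (∏ i, rising O.σ (O.lc (L i) ^ Dv i) m) *
            MvPolynomial.C (∏ i, ((⇑O.σ)^[m] (O.lc (L i))) ^ Dv i)) * P - V
          = MvPolynomial.C (∏ i, rising O.σ (O.lc (L i) ^ Dv i) m) *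
              (MvPolynomial.C (∏ i, ((⇑O.σ)^[m] (O.lc (L i))) ^ Dv i) * P - P₁)
            + (MvPolynomial.C (∏ i, rising O.σ (O.lc (L i) ^ Dv i) m) * P₁ - V) := by
        ring
      rw [hkey]
      exact add_mem (Ideal.mul_mem_left _ _ hP₁mem) hVmem
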